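/- Let B be a minimal subset such that Y ⫫̸ X | B for a relevant variable X. Then every variable X' ∈ B has degree at most |B|, i.e., there exists a set B' of size at most |B| with Y ⫫̸ X' | B'. -/
import Mathlib


/-- If `B` is a minimal subset with `Y ⫫̸ X | B` for a relevant variable `X`,
then every `X' ∈ B` has degree at most `|B|`: there exists `B' ⊆ V \ {X'}` with
`|B'| ≤ |B|` and `Y ⫫̸ X' | B'`.  Conditional independence is abstracted as a relation
`CI` satisfying the semi-graphoid axioms; `y` is the output, `V = univ \ {y}`. -/
theorem minimal_conditioning_degree_le_card
    {ι : Type*} [Fintype ι] [DecidableEq ι]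
    (CI : Finset ι → Finset ι → Finset ι → Prop)
    (symm : ∀ S T R, CI S T R → CI T S R)
    (decomp : ∀ S T U R, CI S (T ∪ U) R → CI S T R)
    (weakUnion : ∀ S T U R, CI S (T ∪ U) R → CI S T (R ∪ U))
    (contraction : ∀ S T U R, CI S T R → CI S U (R ∪ T) → CI S (T ∪ U) R)
    (y X : ι) (hXy : X ≠ y)
    (B : Finset ι) (hB : B ⊆ (Finset.univ.erase y).erase X)
    (hdep : ¬ CI {y} {X} B)
    (hmin : ∀ B' ⊂ B, CI {y} {X} B') :
    ∀ X' ∈ B, ∃ B' ⊆ (Finset.univ.erase y).erase X',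
      B'.card ≤ B.card ∧ ¬ CI {y} {X'} B' := by
  intro X' hX'
  have hX'X : X' ≠ X := by
    intro h; exact (Finset.ne_of_mem_erase (hB hX')) h
  have hX'y : X' ≠ y := by
    intro h; exact (Finset.ne_of_mem_erase (Finset.mem_of_mem_erase (hB hX'))) h
  have hXnotB : X ∉ B := fun h => (Finset.ne_of_mem_erase (hB h)) rfl
  refine ⟨(B.erase X') ∪ {X}, ?_, ?_, ?_⟩
  · intro a ha
    rcases Finset.mem_union.mp ha with h | h
    · exact Finset.mem_erase.mpr ⟨Finset.ne_of_mem_erase h,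
        Finset.mem_of_mem_erase (hB (Finset.mem_of_mem_erase h))⟩
    · have : a = X := Finset.mem_singleton.mp h
      subst this
      exact Finset.mem_erase.mpr ⟨hX'X.symm, Finset.mem_erase.mpr ⟨hXy, Finset.mem_univ _⟩⟩
  · have h1 : (B.erase X').card = B.card - 1 := Finset.card_erase_of_mem hX'
    have h2 : ((B.erase X') ∪ {X}).card ≤ (B.erase X').card + 1 := by
      simpa using Finset.card_union_le (B.erase X') {X}
    have hBpos : 1 ≤ B.card := Finset.card_pos.mpr ⟨X', hX'⟩
    omega
  · intro hCI
    have hsub : B.erase X' ⊂ B := Finset.erase_ssubset hX'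
    have h1 : CI {y} {X} (B.erase X') := hmin _ hsub
    have h2 : CI {y} ({X} ∪ {X'}) (B.erase X') := contraction _ _ _ _ h1 hCI
    have h3 : CI {y} {X} ((B.erase X') ∪ {X'}) := weakUnion _ _ _ _ h2
    have he : B.erase X' ∪ {X'} = B := by
      ext a
      simp only [Finset.mem_union, Finset.mem_erase, Finset.mem_singleton]
      constructor
      · rintro (⟨_, h⟩ | rfl) <;> [exact h; exact hX']
      · intro h; by_cases ha : a = X' <;> simp [ha, h]
    rw [he] at h3
    exact hdep h3
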